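/- Let V be a finite-dimensional complex vector space, N a nilpotent endomorphism, and u ∈ V with N^n u ≠ 0, N^{n+1}u = 0. Fix 0 ≤ k ≤ n+1 and let W = span{u, Nu, ..., N^n u}. For z with Im(z) ≠ 0, the subspaces exp(zN)·span{u, Nu, ..., N^{n-k}u} and exp(z̄N)·span{u, Nu, ..., N^{k-1}u} intersect trivially and together span W; i.e., W = exp(zN)·span{N^l u : 0 ≤ l ≤ n−k} ⊕ exp(z̄N)·span{N^l u : 0 ≤ l ≤ k−1}. -/

import Mathlib

open Finset Polynomial

private lemma prod_sub_eq_descFactorial (m l : ℕ) :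
    (∏ i ∈ range l, ((m : ℂ) - (i : ℕ))) = (m.descFactorial l : ℂ) := by
  induction l with
  | zero => simp
  | succ l ih =>
    rw [prod_range_succ, ih, Nat.descFactorial_succ, Nat.cast_mul]
    rcases le_or_gt l m with h | h
    · rw [Nat.cast_sub h]; ring
    · simp [Nat.descFactorial_eq_zero_iff_lt.mpr h]

private lemma descFactorial_cast (m l : ℕ) (h : l ≤ m) :
    (m.descFactorial l : ℂ) = (m.factorial : ℂ) / ((m - l).factorial : ℂ) := by
  rw [eq_div_iff (by exact_mod_cast (m - l).factorial_ne_zero),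
    ← Nat.cast_mul, mul_comm, Nat.factorial_mul_descFactorial h]

private lemma poly_vanish (w : ℂ) (hw : w ≠ 0) (r s n : ℕ) (hrs : r + s = n + 1)
    (c : ℕ → ℂ)
    (h : ∀ m : ℕ, s ≤ m → m ≤ n →
      (∑ l ∈ range r,
        c l * (if l ≤ m then w ^ (m - l) / ((m - l).factorial : ℂ) else 0)) = 0) :
    ∀ l < r, c l = 0 := by
  set p : ℂ[X] := ∑ l ∈ range r, C (c l / w ^ l) * ∏ i ∈ range l, (X - C (i : ℂ)) with hp
  have hdeg : ∀ l : ℕ, (∏ i ∈ range l, (X - C (i : ℂ))).natDegree = l := by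
    intro l
    rw [natDegree_prod _ _ fun i _ => X_sub_C_ne_zero _]
    have h1 : ∀ x : ℕ, (X - C (x : ℂ)).natDegree = 1 := fun x => natDegree_X_sub_C _
    rw [Finset.sum_congr rfl fun x _ => h1 x, Finset.sum_const, card_range, smul_eq_mul, mul_one]
  have hmonic : ∀ l : ℕ, (∏ i ∈ range l, (X - C (i : ℂ))).Monic :=
    fun l => monic_prod_of_monic _ _ fun i _ => monic_X_sub_C _
  have heval : ∀ m : ℕ, s ≤ m → m ≤ n → p.eval (m : ℂ) = 0 := by
    intro m hsm hmn
    have hm := h m hsm hmn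
    rw [hp]
    simp only [eval_finset_sum, eval_mul, eval_C, eval_prod, eval_sub, eval_X]
    calc
      (∑ l ∈ range r, c l / w ^ l * ∏ i ∈ range l, ((m : ℂ) - (i : ℕ)))
          = (m.factorial : ℂ) / w ^ m * ∑ l ∈ range r,
              c l * (if l ≤ m then w ^ (m - l) / ((m - l).factorial : ℂ) else 0) := by
        rw [mul_sum]
        refine Finset.sum_congr rfl fun l _ => ?_
        rw [prod_sub_eq_descFactorial]
        rcases le_or_gt l m with hlm | hlm
        · rw [if_pos hlm, descFactorial_cast m l hlm]
          have h1 : w ^ m = w ^ (m - l) * w ^ l := by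
            rw [← pow_add, Nat.sub_add_cancel hlm]
          have hf1 : ((m - l).factorial : ℂ) ≠ 0 := by
            exact_mod_cast (m - l).factorial_ne_zero
          field_simp [h1]
          rw [h1]
          ring
        · rw [if_neg (not_le.mpr hlm), Nat.descFactorial_eq_zero_iff_lt.mpr hlm]
          simp
      _ = 0 := by rw [hm, mul_zero]
  have hpz : p = 0 := by
    rcases Nat.eq_zero_or_pos r with hr | hr
    · simp [hp, hr]
    · apply eq_zero_of_natDegree_lt_card_of_eval_eq_zero p
        (f := fun i : Fin r => ((s + (i : ℕ) : ℕ) : ℂ))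
      · intro i j hij
        simp only [Nat.cast_inj] at hij
        exact Fin.ext (by omega)
      · intro i
        exact heval _ (Nat.le_add_right _ _) (by have := i.isLt; omega)
      · rw [Fintype.card_fin]
        have : p.natDegree ≤ r - 1 := by
          apply natDegree_sum_le_of_forall_le
          intro l hl
          refine (natDegree_C_mul_le _ _).trans ?_
          rw [hdeg]
          exact Nat.le_sub_one_of_lt (mem_range.mp hl)
        omega
  intro l hl
  by_contra hc
  have hS : ((range r).filter fun j => c j ≠ 0).Nonempty :=
    ⟨l, mem_filter.mpr ⟨mem_range.mpr hl, hc⟩⟩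
  set l₀ := ((range r).filter fun j => c j ≠ 0).max' hS with hl₀
  have hl₀mem := ((range r).filter fun j => c j ≠ 0).max'_mem hS
  have hl₀r : l₀ < r := mem_range.mp (mem_filter.mp hl₀mem).1
  have hc₀ : c l₀ ≠ 0 := (mem_filter.mp hl₀mem).2
  have hcoeff : p.coeff l₀ = c l₀ / w ^ l₀ := by
    rw [hp, finset_sum_coeff, Finset.sum_eq_single l₀]
    · rw [coeff_C_mul]
      have : (∏ i ∈ range l₀, (X - C (i : ℂ))).coeff l₀ = 1 := by
        have h2 := (hmonic l₀).coeff_natDegree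
        rwa [hdeg] at h2
      rw [this, mul_one]
    · intro b hb hbne
      rcases lt_or_gt_of_ne hbne with hblt | hbgt
      · -- b < l₀ : coefficient at l₀ is zero since degree b < l₀
        rw [coeff_C_mul, coeff_eq_zero_of_natDegree_lt (by rw [hdeg]; exact hblt), mul_zero]
      · -- b > l₀ : c b = 0 since l₀ is max
        have : c b = 0 := by
          by_contra hcb
          exact absurd (Finset.le_max' _ b (mem_filter.mpr ⟨hb, hcb⟩)) (not_le.mpr hbgt)
        rw [coeff_C_mul, this, zero_div, zero_mul]
    · intro hnot
      exact absurd (mem_range.mpr hl₀r) hnot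
  rw [hpz, coeff_zero] at hcoeff
  exact hc₀ (by
    rcases div_eq_zero_iff.mp hcoeff.symm with h' | h'
    · exact h'
    · exact absurd h' (pow_ne_zero _ hw))

section EndLemmas

variable {V : Type} [AddCommGroup V] [Module ℂ V]

private lemma E_group (N : V →ₗ[ℂ] V) (K : ℕ) (hK : N ^ K = 0) (z w : ℂ) :
    (∑ j ∈ range K, (z ^ j / (j.factorial : ℂ)) • N ^ j) *
      (∑ j ∈ range K, (w ^ j / (j.factorial : ℂ)) • N ^ j) =
      ∑ j ∈ range K, ((z + w) ^ j / (j.factorial : ℂ)) • N ^ j := by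
  classical
  set P : ℂ → ℂ[X] := fun y => ∑ j ∈ range K, C (y ^ j / (j.factorial : ℂ)) * X ^ j with hP
  have key : ∀ y : ℂ,
      (∑ j ∈ range K, (y ^ j / (j.factorial : ℂ)) • N ^ j) = aeval N (P y) := by
    intro y
    rw [hP, map_sum]
    refine Finset.sum_congr rfl fun j _ => ?_
    rw [map_mul, aeval_C, map_pow, aeval_X, Algebra.algebraMap_eq_smul_one, smul_mul_assoc,
      one_mul]
  have hco : ∀ (y : ℂ) (i : ℕ),
      (P y).coeff i = if i ∈ range K then y ^ i / (i.factorial : ℂ) else 0 := by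
    intro y i
    rw [hP, finset_sum_coeff]
    simp_rw [coeff_C_mul, coeff_X_pow, mul_ite, mul_one, mul_zero]
    rw [Finset.sum_ite_eq (range K) i fun j => y ^ j / (j.factorial : ℂ)]
  have hdvd : X ^ K ∣ P z * P w - P (z + w) := by
    rw [X_pow_dvd_iff]
    intro d hd
    rw [coeff_sub, coeff_mul, Finset.Nat.sum_antidiagonal_eq_sum_range_succ_mk, hco,
      if_pos (mem_range.mpr hd)]
    have hterm : ∀ i ∈ range (d + 1),
        (P z).coeff i * (P w).coeff (d - i)
          = z ^ i * w ^ (d - i) * (d.choose i : ℂ) / (d.factorial : ℂ) := by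
      intro i hi
      have hi' : i ≤ d := Nat.lt_succ_iff.mp (mem_range.mp hi)
      rw [hco, hco, if_pos (mem_range.mpr (lt_of_le_of_lt hi' hd)),
        if_pos (mem_range.mpr (lt_of_le_of_lt (Nat.sub_le d i) hd))]
      have hfact : ((d.choose i : ℕ) : ℂ) * (i.factorial : ℂ) * (((d - i).factorial : ℕ) : ℂ)
          = (d.factorial : ℂ) := by
        exact_mod_cast congrArg (fun t : ℕ => (t : ℂ)) (Nat.choose_mul_factorial_mul_factorial hi')
      have h1 : (i.factorial : ℂ) ≠ 0 := by exact_mod_cast i.factorial_ne_zero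
      have h2 : ((d - i).factorial : ℂ) ≠ 0 := by exact_mod_cast (d - i).factorial_ne_zero
      have h3 : (d.factorial : ℂ) ≠ 0 := by exact_mod_cast d.factorial_ne_zero
      have h4 : ((d.choose i : ℕ) : ℂ) ≠ 0 := by
        exact_mod_cast (Nat.choose_pos hi').ne'
      rw [← hfact]
      field_simp
    rw [Finset.sum_congr rfl hterm, add_pow, Finset.sum_div, sub_eq_zero]
  obtain ⟨q, hq⟩ := hdvd
  have hPzw : P z * P w = P (z + w) + X ^ K * q := by rw [← hq]; ring
  rw [key z, key w, key (z + w), ← map_mul, hPzw, map_add, map_mul, map_pow, aeval_X, hK,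
    zero_mul, add_zero]

private lemma E_one (N : V →ₗ[ℂ] V) (K : ℕ) (hKpos : 0 < K) :
    (∑ j ∈ range K, ((0 : ℂ) ^ j / (j.factorial : ℂ)) • N ^ j) = 1 := by
  rw [Finset.sum_eq_single 0]
  · simp
  · intro j _ hj0
    rw [zero_pow hj0, zero_div, zero_smul]
  · intro h; exact absurd (mem_range.mpr hKpos) h

private lemma E_apply (N : V →ₗ[ℂ] V) (u : V) (n : ℕ)
    (hvan : ∀ m, n + 1 ≤ m → (N ^ m) u = 0)
    (K : ℕ) (hKn : n + 1 ≤ K) (z : ℂ) (l : ℕ) (hl : l ≤ n) :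
    (∑ j ∈ range K, (z ^ j / (j.factorial : ℂ)) • N ^ j) ((N ^ l) u)
      = ∑ m ∈ range (n + 1),
          (if l ≤ m then z ^ (m - l) / ((m - l).factorial : ℂ) else 0) • (N ^ m) u := by
  have happ : ∀ j : ℕ, (N ^ j) ((N ^ l) u) = (N ^ (j + l)) u := by
    intro j; rw [← Module.End.mul_apply, ← pow_add]
  rw [LinearMap.sum_apply]
  simp_rw [LinearMap.smul_apply, happ]
  have hL : (∑ j ∈ range K, (z ^ j / (j.factorial : ℂ)) • (N ^ (j + l)) u)
      = ∑ j ∈ range (n + 1 - l), (z ^ j / (j.factorial : ℂ)) • (N ^ (j + l)) u := by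
    refine (Finset.sum_subset (Finset.range_subset_range.mpr (by omega)) ?_).symm
    intro j hj hj'
    rw [hvan (j + l) (by simp only [mem_range] at hj hj'; omega), smul_zero]
  rw [hL]
  have hR : (∑ m ∈ range (n + 1),
        (if l ≤ m then z ^ (m - l) / ((m - l).factorial : ℂ) else 0) • (N ^ m) u)
      = ∑ m ∈ Finset.Ico l (n + 1), (z ^ (m - l) / ((m - l).factorial : ℂ)) • (N ^ m) u := by
    rw [Finset.range_eq_Ico]
    rw [← Finset.sum_subset (Finset.Ico_subset_Ico (Nat.zero_le l) le_rfl) ?_]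
    · exact Finset.sum_congr rfl fun m hm => by rw [if_pos (Finset.mem_Ico.mp hm).1]
    · intro m hm hm'
      rw [if_neg, zero_smul]
      simp only [Finset.mem_Ico] at hm hm'
      omega
  rw [hR, Finset.sum_Ico_eq_sum_range]
  have hnl : n + 1 - l = n + 1 - l := rfl
  refine Finset.sum_congr rfl fun j hj => ?_
  rw [Nat.add_sub_cancel_left, add_comm l j]

private lemma indep_coeff (N : V →ₗ[ℂ] V) (u : V) (n : ℕ)
    (hu : (N ^ n) u ≠ 0) (hvan : ∀ m, n + 1 ≤ m → (N ^ m) u = 0)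
    (c : ℕ → ℂ) (hsum : ∑ l ∈ range (n + 1), c l • (N ^ l) u = 0) :
    ∀ l, l ≤ n → c l = 0 := by
  intro l
  induction l using Nat.strong_induction_on with
  | _ l ih =>
    intro hln
    have happ := congrArg (fun x => (N ^ (n - l)) x) hsum
    simp only [map_sum, map_smul, map_zero] at happ
    have hterm : ∀ i : ℕ, (N ^ (n - l)) ((N ^ i) u) = (N ^ (n - l + i)) u := by
      intro i; rw [← Module.End.mul_apply, ← pow_add]
    simp_rw [hterm] at happ
    rw [Finset.sum_eq_single l] at happ
    · rw [Nat.sub_add_cancel hln] at happ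
      rcases smul_eq_zero.mp happ with h | h
      · exact h
      · exact absurd h hu
    · intro i hi hine
      rcases lt_or_gt_of_ne hine with hlt | hgt
      · rw [ih i hlt (by omega), zero_smul]
      · rw [hvan (n - l + i) (by omega), smul_zero]
    · intro h; exact absurd (mem_range.mpr (by omega)) h

end EndLemmas

/-- Direct-sum reformulation of the wedge computation: if `N^n u ≠ 0` and
`N^{n+1} u = 0`, then for `0 ≤ k ≤ n+1` and `Im z ≠ 0`, the cyclic subspace
`W = span{u, Nu, …, N^n u}` decomposes as
`W = exp(zN)·span{N^l u : 0 ≤ l ≤ n-k} ⊕ exp(z̄N)·span{N^l u : 0 ≤ l ≤ k-1}`. -/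
theorem exp_nilpotent_cyclic_complement
    (V : Type) [AddCommGroup V] [Module ℂ V]
    (N : V →ₗ[ℂ] V) (hNnil : IsNilpotent N)
    (K : ℕ) (hK : N ^ K = 0)
    (E : ℂ → (V →ₗ[ℂ] V))
    (hE : ∀ z : ℂ,
      E z = ∑ j ∈ Finset.range K, (z ^ j / (j.factorial : ℂ)) • (N ^ j))
    (u : V) (n : ℕ) (hu : (N ^ n) u ≠ 0) (hu' : (N ^ (n + 1)) u = 0)
    (k : ℕ) (hk : k ≤ n + 1) :
    ∀ z : ℂ, z.im ≠ 0 →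
      Disjoint
        (Submodule.map (E z)
          (Submodule.span ℂ (Set.range fun l : Fin (n + 1 - k) => (N ^ (l : ℕ)) u)))
        (Submodule.map (E (starRingEnd ℂ z))
          (Submodule.span ℂ (Set.range fun l : Fin k => (N ^ (l : ℕ)) u))) ∧
      Submodule.map (E z)
          (Submodule.span ℂ (Set.range fun l : Fin (n + 1 - k) => (N ^ (l : ℕ)) u)) ⊔
        Submodule.map (E (starRingEnd ℂ z))
          (Submodule.span ℂ (Set.range fun l : Fin k => (N ^ (l : ℕ)) u)) =
      Submodule.span ℂ (Set.range fun l : Fin (n + 1) => (N ^ (l : ℕ)) u) := by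
  intro z hz
  -- K is at least n + 1
  have hKn : n + 1 ≤ K := by
    by_contra hcon
    push_neg at hcon
    apply hu
    have h1 : n = (n - K) + K := by omega
    rw [h1, pow_add, Module.End.mul_apply, hK, LinearMap.zero_apply, map_zero]
  have hKpos : 0 < K := by omega
  have hvan : ∀ m, n + 1 ≤ m → (N ^ m) u = 0 := by
    intro m hm
    have h1 : m = (m - (n + 1)) + (n + 1) := by omega
    rw [h1, pow_add, Module.End.mul_apply, hu', map_zero]
  set v : Fin (n + 1) → V := fun l => (N ^ (l : ℕ)) u with hv
  -- linear independence of v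
  have hLI : LinearIndependent ℂ v := by
    rw [Fintype.linearIndependent_iff]
    intro g hg i
    set c : ℕ → ℂ := fun l => if h : l < n + 1 then g ⟨l, h⟩ else 0 with hc
    have hg' : ∑ l ∈ range (n + 1), c l • (N ^ l) u = 0 := by
      rw [← hg, ← Fin.sum_univ_eq_sum_range fun l => c l • (N ^ l) u]
      exact Finset.sum_congr rfl fun j _ => by simp [hc, hv, j.isLt, Nat.not_lt.mpr (Nat.le_of_lt_succ j.isLt)]
    have := indep_coeff N u n hu hvan c hg' i (by have := i.isLt; omega)
    simpa [hc, i.isLt, Nat.le_of_lt_succ i.isLt] using this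
  have hLIr : ∀ r, r ≤ n + 1 → LinearIndependent ℂ (fun l : Fin r => (N ^ (l : ℕ)) u) :=
    fun r hr => hLI.comp (Fin.castLE hr) (Fin.castLE_injective hr)
  have hfinr : ∀ r, r ≤ n + 1 →
      Module.finrank ℂ (Submodule.span ℂ (Set.range fun l : Fin r => (N ^ (l : ℕ)) u)) = r := by
    intro r hr
    rw [finrank_span_eq_card (hLIr r hr), Fintype.card_fin]
  have hfinW : Module.finrank ℂ (Submodule.span ℂ (Set.range v)) = n + 1 := by
    rw [finrank_span_eq_card hLI, Fintype.card_fin]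
  -- injectivity of E y
  have hcomp : ∀ y : ℂ, (E (-y)) * (E y) = 1 := by
    intro y
    rw [hE, hE, E_group N K hK, neg_add_cancel, E_one N K hKpos]
  have hinj : ∀ y : ℂ, Function.Injective (E y) := by
    intro y a b hab
    have h1 : ((E (-y)) * (E y)) a = ((E (-y)) * (E y)) b := by
      rw [Module.End.mul_apply, Module.End.mul_apply, hab]
    rwa [hcomp y, Module.End.one_apply, Module.End.one_apply] at h1
  -- images of generators stay in W
  have hmemW : ∀ (y : ℂ) (l : ℕ), l ≤ n →
      (E y) ((N ^ l) u) ∈ Submodule.span ℂ (Set.range v) := by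
    intro y l hl
    rw [hE, E_apply N u n hvan K hKn y l hl]
    refine Submodule.sum_mem _ fun m hm => Submodule.smul_mem _ _ (Submodule.subset_span ?_)
    exact ⟨⟨m, mem_range.mp hm⟩, rfl⟩
  have hmaple : ∀ (y : ℂ) (r : ℕ), r ≤ n + 1 →
      Submodule.map (E y) (Submodule.span ℂ (Set.range fun l : Fin r => (N ^ (l : ℕ)) u))
        ≤ Submodule.span ℂ (Set.range v) := by
    intro y r hr
    rw [Submodule.map_span, Submodule.span_le]
    rintro x ⟨x', ⟨l, rfl⟩, rfl⟩
    exact hmemW y l (by have := l.isLt; omega)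
  -- disjointness
  have hdisj : Disjoint
      (Submodule.map (E z)
        (Submodule.span ℂ (Set.range fun l : Fin (n + 1 - k) => (N ^ (l : ℕ)) u)))
      (Submodule.map (E (starRingEnd ℂ z))
        (Submodule.span ℂ (Set.range fun l : Fin k => (N ^ (l : ℕ)) u))) := by
    rw [Submodule.disjoint_def]
    intro x hxA hxB
    obtain ⟨a, ha, hax⟩ := Submodule.mem_map.mp hxA
    obtain ⟨b, hb, hbx⟩ := Submodule.mem_map.mp hxB
    set w : ℂ := -z + starRingEnd ℂ z with hw
    have hwne : w ≠ 0 := by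
      intro h0
      apply hz
      have him : w.im = -2 * z.im := by
        rw [hw, Complex.add_im, Complex.neg_im, Complex.conj_im]; ring
      rw [h0, Complex.zero_im] at him
      linarith [him]
    have h2 : ∀ x' : V, (E (-z)) ((E (starRingEnd ℂ z)) x') = (E w) x' := by
      intro x'
      rw [← Module.End.mul_apply, hE (-z), hE (starRingEnd ℂ z), E_group N K hK, hE w, ← hw]
    have h3 : (E (-z)) ((E z) a) = a := by
      rw [← Module.End.mul_apply, hcomp z, Module.End.one_apply]
    have hab : (E w) b = a := by rw [← h2 b, hbx, ← hax, h3]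
    -- coefficients of b
    obtain ⟨cb, hcb⟩ := Submodule.mem_span_range_iff_exists_fun ℂ |>.mp hb
    set c : ℕ → ℂ := fun l => if h : l < k then cb ⟨l, h⟩ else 0 with hc
    have hbc : b = ∑ l ∈ range k, c l • (N ^ l) u := by
      rw [← hcb, ← Fin.sum_univ_eq_sum_range fun l => c l • (N ^ l) u]
      exact Finset.sum_congr rfl fun i _ => by simp [hc, i.isLt]
    -- expansion of (E w) b in the basis
    have hEwb : (E w) b = ∑ m ∈ range (n + 1),
        (∑ l ∈ range k,
          c l * (if l ≤ m then w ^ (m - l) / ((m - l).factorial : ℂ) else 0)) • (N ^ m) u := by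
      rw [hbc, map_sum]
      have e1 : ∀ l ∈ range k, (E w) (c l • (N ^ l) u)
          = ∑ m ∈ range (n + 1),
              (c l * (if l ≤ m then w ^ (m - l) / ((m - l).factorial : ℂ) else 0)) • (N ^ m) u := by
        intro l hl
        rw [map_smul, hE, E_apply N u n hvan K hKn w l (by have := mem_range.mp hl; omega),
          Finset.smul_sum]
        exact Finset.sum_congr rfl fun m _ => by rw [smul_smul]
      rw [Finset.sum_congr rfl e1, Finset.sum_comm]
      exact Finset.sum_congr rfl fun m _ => (Finset.sum_smul).symm
    -- coefficients of a
    obtain ⟨da, hda⟩ := Submodule.mem_span_range_iff_exists_fun ℂ |>.mp ha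
    set d : ℕ → ℂ := fun m => if h : m < n + 1 - k then da ⟨m, h⟩ else 0 with hd
    have had : a = ∑ m ∈ range (n + 1), d m • (N ^ m) u := by
      have hsub : ∑ m ∈ range (n + 1), d m • (N ^ m) u
          = ∑ m ∈ range (n + 1 - k), d m • (N ^ m) u := by
        refine (Finset.sum_subset (Finset.range_subset_range.mpr (by omega)) ?_).symm
        intro m _ hm'
        simp only [mem_range] at hm'
        rw [hd]
        simp only [dif_neg hm', zero_smul]
      rw [hsub, ← hda, ← Fin.sum_univ_eq_sum_range fun m => d m • (N ^ m) u]
      exact Finset.sum_congr rfl fun i _ => by simp [hd, i.isLt]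
    -- subtract and use independence
    have hdiff : ∑ m ∈ range (n + 1),
        ((∑ l ∈ range k,
          c l * (if l ≤ m then w ^ (m - l) / ((m - l).factorial : ℂ) else 0)) - d m)
            • (N ^ m) u = 0 := by
      simp_rw [sub_smul]
      rw [Finset.sum_sub_distrib, ← hEwb, ← had, hab, sub_self]
    have hcoefs := indep_coeff N u n hu hvan _ hdiff
    have hcond : ∀ m : ℕ, n + 1 - k ≤ m → m ≤ n →
        (∑ l ∈ range k,
          c l * (if l ≤ m then w ^ (m - l) / ((m - l).factorial : ℂ) else 0)) = 0 := by
      intro m h1 h2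
      have h4 := hcoefs m h2
      have hdm : d m = 0 := by rw [hd]; exact dif_neg (by omega)
      rw [hdm, sub_zero] at h4
      exact h4
    have hczero := poly_vanish w hwne k (n + 1 - k) n (by omega) c hcond
    have hb0 : b = 0 := by
      rw [hbc]
      exact Finset.sum_eq_zero fun l hl => by rw [hczero l (mem_range.mp hl), zero_smul]
    rw [← hbx, hb0, map_zero]
  refine ⟨hdisj, ?_⟩
  -- finite dimensionality instances
  haveI : FiniteDimensional ℂ (Submodule.span ℂ (Set.range v)) :=
    FiniteDimensional.span_of_finite ℂ (Set.finite_range v)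
  haveI hfA : FiniteDimensional ℂ
      (Submodule.span ℂ (Set.range fun l : Fin (n + 1 - k) => (N ^ (l : ℕ)) u)) :=
    FiniteDimensional.span_of_finite ℂ (Set.finite_range _)
  haveI hfB : FiniteDimensional ℂ
      (Submodule.span ℂ (Set.range fun l : Fin k => (N ^ (l : ℕ)) u)) :=
    FiniteDimensional.span_of_finite ℂ (Set.finite_range _)
  apply Submodule.eq_of_le_of_finrank_le
    (sup_le (hmaple z (n + 1 - k) (by omega)) (hmaple (starRingEnd ℂ z) k hk))
  have h1 : Module.finrank ℂ
      (Submodule.map (E z)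
        (Submodule.span ℂ (Set.range fun l : Fin (n + 1 - k) => (N ^ (l : ℕ)) u)))
      = n + 1 - k := by
    rw [← LinearEquiv.finrank_eq (Submodule.equivMapOfInjective (E z) (hinj z) _)]
    exact hfinr (n + 1 - k) (by omega)
  have h2 : Module.finrank ℂ
      (Submodule.map (E (starRingEnd ℂ z))
        (Submodule.span ℂ (Set.range fun l : Fin k => (N ^ (l : ℕ)) u)))
      = k := by
    rw [← LinearEquiv.finrank_eq (Submodule.equivMapOfInjective (E (starRingEnd ℂ z)) (hinj _) _)]
    exact hfinr k hk
  have h3 := Submodule.finrank_sup_add_finrank_inf_eq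
    (Submodule.map (E z)
      (Submodule.span ℂ (Set.range fun l : Fin (n + 1 - k) => (N ^ (l : ℕ)) u)))
    (Submodule.map (E (starRingEnd ℂ z))
      (Submodule.span ℂ (Set.range fun l : Fin k => (N ^ (l : ℕ)) u)))
  rw [disjoint_iff.mp hdisj, finrank_bot, add_zero, h1, h2] at h3
  rw [hfinW, h3]
  omega
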